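/- Let a → (f(a), g(a)) be given where g(a) > 0 for all a in an index set A (linear-fractional objective), and consider maximizing f(a)/g(a). Charnes–Cooper correctness: for μ a probability measure on ℝ supported in [−C,C] and Λ > 1, with b = Λ²−1, c = ∫ y dμ, d = 1, the map w ↦ (w̃, ṽ) where w̃ = w/(b·∫ w dμ + d) and ṽ = 1/(b·∫ w dμ + d) is a bijection from {measurable w : ℝ → [0,1]} onto {(w̃, ṽ) : ṽ > 0, 0 ≤ w̃ ≤ ṽ pointwise, b·∫ w̃ dμ + d·ṽ = 1}, and under this bijection F(w) = (Λ²−1)·∫ y·w̃ dμ + c·ṽ, where F(w) = (c + b·∫ y·w dμ)/(1 + b·∫ w dμ). -/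

import Mathlib

open MeasureTheory

private lemma intble {μ : Measure ℝ} [IsProbabilityMeasure μ] {f : ℝ → ℝ}
    (hf : Measurable f) {M : ℝ} (h : ∀ᵐ y ∂μ, |f y| ≤ M) : Integrable f μ :=
  (integrable_const M).mono' hf.aestronglyMeasurable (h.mono fun _ hy => by simpa using hy)

/-- Charnes–Cooper correctness: `w ↦ (w̃, ṽ)` with `w̃ = w/(b∫w + 1)`, `ṽ = 1/(b∫w + 1)`
is a bijection onto the feasible set of the linear program, and transforms the
linear-fractional objective `F(w)` into the linear objective `b·∫ y·w̃ dμ + c·ṽ`. -/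
theorem stmt_8 (μ : Measure ℝ) [IsProbabilityMeasure μ] (C : ℝ) (hC : 0 < C)
    (hsupp : ∀ᵐ y ∂μ, y ∈ Set.Icc (-C) C) (Λ : ℝ) (hΛ : 1 < Λ) :
    (∀ w : ℝ → ℝ, Measurable w → (∀ y, w y ∈ Set.Icc (0:ℝ) 1) →
      (0 < 1 / ((Λ ^ 2 - 1) * (∫ y, w y ∂μ) + 1)) ∧
      (∀ y, 0 ≤ w y / ((Λ ^ 2 - 1) * (∫ z, w z ∂μ) + 1) ∧
            w y / ((Λ ^ 2 - 1) * (∫ z, w z ∂μ) + 1) ≤ 1 / ((Λ ^ 2 - 1) * (∫ z, w z ∂μ) + 1)) ∧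
      ((Λ ^ 2 - 1) * (∫ y, w y / ((Λ ^ 2 - 1) * (∫ z, w z ∂μ) + 1) ∂μ) +
          1 * (1 / ((Λ ^ 2 - 1) * (∫ z, w z ∂μ) + 1)) = 1) ∧
      ((∫ y, y ∂μ + (Λ ^ 2 - 1) * ∫ y, y * w y ∂μ) / (1 + (Λ ^ 2 - 1) * ∫ y, w y ∂μ)
        = (Λ ^ 2 - 1) * (∫ y, y * (w y / ((Λ ^ 2 - 1) * (∫ z, w z ∂μ) + 1)) ∂μ) +
            (∫ y, y ∂μ) * (1 / ((Λ ^ 2 - 1) * (∫ z, w z ∂μ) + 1)))) ∧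
    (∀ (wt : ℝ → ℝ) (vt : ℝ), Measurable wt → 0 < vt →
      (∀ y, 0 ≤ wt y ∧ wt y ≤ vt) →
      (Λ ^ 2 - 1) * (∫ y, wt y ∂μ) + 1 * vt = 1 →
      ∃! w : ℝ → ℝ, Measurable w ∧ (∀ y, w y ∈ Set.Icc (0:ℝ) 1) ∧
        (∀ y, wt y = w y / ((Λ ^ 2 - 1) * (∫ z, w z ∂μ) + 1)) ∧
        vt = 1 / ((Λ ^ 2 - 1) * (∫ z, w z ∂μ) + 1)) := by
  have hb : (0:ℝ) < Λ ^ 2 - 1 := by nlinarith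
  constructor
  · intro w hw hw01
    have hInt : Integrable w μ :=
      intble hw (Filter.Eventually.of_forall fun y =>
        abs_le.mpr ⟨by linarith [(hw01 y).1], (hw01 y).2⟩)
    have hI0 : 0 ≤ ∫ y, w y ∂μ := integral_nonneg fun y => (hw01 y).1
    set D := (Λ ^ 2 - 1) * (∫ z, w z ∂μ) + 1 with hD
    have hDpos : 0 < D := by positivity
    have hDne : D ≠ 0 := ne_of_gt hDpos
    refine ⟨by positivity, fun y => ⟨div_nonneg (hw01 y).1 hDpos.le, ?_⟩, ?_, ?_⟩
    · gcongr
      exact (hw01 y).2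
    · rw [integral_div]; field_simp; exact hD.symm
    · have hywInt : Integrable (fun y => y * w y) μ :=
        intble (measurable_id.mul hw) (hsupp.mono fun y hy => by
          have := (hw01 y); have hyC : |y| ≤ C := abs_le.mpr ⟨hy.1, hy.2⟩
          calc |y * w y| = |y| * |w y| := abs_mul _ _
            _ ≤ C * 1 := by
                apply mul_le_mul hyC _ (abs_nonneg _) hC.le
                rw [abs_le]; exact ⟨by linarith [this.1], this.2⟩
            _ = C := mul_one C)
      have : (∫ y, y * (w y / D) ∂μ) = (∫ y, y * w y ∂μ) / D := by
        simp_rw [← mul_div_assoc]; exact integral_div D _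
      rw [this, hD]
      field_simp
      ring
  · intro wt vt hwt hvt hwtb hcon
    have hIwt : Integrable wt μ :=
      intble hwt (Filter.Eventually.of_forall fun y =>
        abs_le.mpr ⟨by linarith [(hwtb y).1, hvt], (hwtb y).2⟩)
    refine ⟨fun y => wt y / vt, ⟨hwt.div_const vt, fun y =>
      ⟨div_nonneg (hwtb y).1 hvt.le, (div_le_one hvt).mpr (hwtb y).2⟩, ?_⟩, ?_⟩
    · have hint : (∫ z, wt z / vt ∂μ) = (∫ z, wt z ∂μ) / vt := integral_div vt wt
      have hD : (Λ ^ 2 - 1) * (∫ z, wt z / vt ∂μ) + 1 = 1 / vt := by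
        rw [hint]; field_simp; linarith
      rw [hD]
      constructor
      · intro y
        simp only []
        field_simp
      · field_simp
    · rintro w' ⟨hw', hw'01, hwteq, hvteq⟩
      have hI0 : 0 ≤ ∫ y, w' y ∂μ := integral_nonneg fun y => (hw'01 y).1
      set D := (Λ ^ 2 - 1) * (∫ z, w' z ∂μ) + 1 with hD
      have hDpos : 0 < D := by positivity
      have hDvt : D = 1 / vt := by
        rw [hvteq]; field_simp
      funext y
      have := hwteq y
      rw [hDvt] at this
      field_simp at this ⊢
      linarith [this]
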